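/- arXiv:2202.09351 — 5 statements merged into one kernel-verified Lean document; each statement's English description precedes it below -/
import Mathlib

section
/- If P is a subspace of a Lie algebra L over a field of characteristic not 2 such that [P,P]=0 and every nonzero element of P is extremal (i.e., ⁅x,⁅x,L⁆⁆ ⊆ span{x} for all x ∈ P), then P is an inner ideal, i.e., ⁅P,⁅P,L⁆⁆ ⊆ P. -/
/-- If `P` is a subspace of a Lie algebra `L` over a field of characteristic ≠ 2 with
`⁅P,P⁆ = 0` all of whose nonzero elements are extremal, then `P` is an inner ideal. -/
theorem pointSpace_is_innerIdeal {F L : Type*} [Field F] [LieRing L] [LieAlgebra F L]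
    (hchar : (2 : F) ≠ 0)
    (P : Submodule F L)
    (habelian : ∀ x ∈ P, ∀ y ∈ P, ⁅x, y⁆ = 0)
    (hext : ∀ x ∈ P, x ≠ 0 → ∀ z : L, ∃ c : F, ⁅x, ⁅x, z⁆⁆ = c • x) :
    ∀ x ∈ P, ∀ y ∈ P, ∀ z : L, ⁅x, ⁅y, z⁆⁆ ∈ P := by
  intro x hx y hy z
  by_cases hx0 : x = 0
  · simp [hx0]
  by_cases hy0 : y = 0
  · simp [hy0]
  -- symmetry from [x,y] = 0
  have hsym : ⁅x, ⁅y, z⁆⁆ = ⁅y, ⁅x, z⁆⁆ := by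
    have := leibniz_lie x y z
    rw [habelian x hx y hy] at this
    simpa using this
  by_cases hxy0 : x + y = 0
  · -- y = -x
    have hyx : y = -x := by linear_combination (norm := abel) hxy0
    obtain ⟨a, ha⟩ := hext x hx hx0 z
    have : ⁅x, ⁅y, z⁆⁆ = (-a) • x := by
      rw [hyx, neg_lie, lie_neg, ha, neg_smul]
    rw [this]
    exact P.smul_mem _ hx
  · obtain ⟨a, ha⟩ := hext x hx hx0 z
    obtain ⟨b, hb⟩ := hext y hy hy0 z
    obtain ⟨c, hc⟩ := hext (x + y) (P.add_mem hx hy) hxy0 z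
    have key : (2 : F) • ⁅x, ⁅y, z⁆⁆ = c • (x + y) - a • x - b • y := by
      rw [← ha, ← hb, ← hc]
      have expand : ⁅x + y, ⁅x + y, z⁆⁆
          = ⁅x, ⁅x, z⁆⁆ + ⁅x, ⁅y, z⁆⁆ + ⁅y, ⁅x, z⁆⁆ + ⁅y, ⁅y, z⁆⁆ := by
        simp [lie_add, add_lie]; abel
      rw [expand, ← hsym, two_smul]
      abel
    have : ⁅x, ⁅y, z⁆⁆ = (2 : F)⁻¹ • (c • (x + y) - a • x - b • y) := by
      rw [← key, smul_smul, inv_mul_cancel₀ hchar, one_smul]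
    rw [this]
    exact P.smul_mem _ (P.sub_mem (P.sub_mem (P.smul_mem _ (P.add_mem hx hy))
      (P.smul_mem _ hx)) (P.smul_mem _ hy))
end

section
/- Let {e,h,f} be an sl2-triple in a Lie algebra L over a field of characteristic 0 such that ad h acts diagonally with eigenvalues in {-2,-1,0,1,2}. Then every element x in the eigenspace L_2 = {x : ⁅h,x⁆ = 2x} satisfies 4x = ⁅e,⁅e,⁅f,⁅f,x⁆⁆⁆⁆. -/
/-- For an sl2-triple `{e,h,f}` with `ad h` diagonalizable with eigenvalues in
`{-2,-1,0,1,2}`, every `x` in the 2-eigenspace satisfies `4x = ⁅e,⁅e,⁅f,⁅f,x⁆⁆⁆⁆`. -/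
theorem sl2_top_eigenspace_formula {F L : Type*} [Field F] [CharZero F] [LieRing L]
    [LieAlgebra F L] (e h f : L)
    (hhe : ⁅h, e⁆ = (2 : F) • e) (hef : ⁅e, f⁆ = h) (hhf : ⁅h, f⁆ = -((2 : F) • f))
    (hdiag : ∀ x : L, ∃ a b c d g : L,
      x = a + b + c + d + g ∧ ⁅h, a⁆ = (-2 : F) • a ∧ ⁅h, b⁆ = (-1 : F) • b ∧
      ⁅h, c⁆ = 0 ∧ ⁅h, d⁆ = (1 : F) • d ∧ ⁅h, g⁆ = (2 : F) • g) :
    ∀ x : L, ⁅h, x⁆ = (2 : F) • x → (4 : F) • x = ⁅e, ⁅e, ⁅f, ⁅f, x⁆⁆⁆⁆ := by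
  intro x hx
  -- iterated ad h on eigenvectors
  have iter3 : ∀ (t : F) (y : L), ⁅h, y⁆ = t • y → ⁅h, ⁅h, ⁅h, y⁆⁆⁆ = (t ^ 3) • y := by
    intro t y hy
    simp only [hy, lie_smul]
    module
  have iter5 : ∀ (t : F) (y : L), ⁅h, y⁆ = t • y →
      ⁅h, ⁅h, ⁅h, ⁅h, ⁅h, y⁆⁆⁆⁆⁆ = (t ^ 5) • y := by
    intro t y hy
    simp only [hy, lie_smul]
    module
  -- Step 1 : ⁅e, x⁆ = 0
  have hw : ⁅h, ⁅e, x⁆⁆ = (4 : F) • ⁅e, x⁆ := by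
    rw [leibniz_lie, hhe, hx, smul_lie, lie_smul]
    module
  have hex : ⁅e, x⁆ = (0 : L) := by
    obtain ⟨a, b, c, d, g, hsum, ha, hb, hc, hd, hg⟩ := hdiag ⁅e, x⁆
    -- E1
    have E1 : (4 : F) • ⁅e, x⁆ = (-2 : F) • a + (-1 : F) • b + 0 + (1 : F) • d + (2 : F) • g := by
      rw [← hw]
      conv_lhs => rw [hsum]
      rw [lie_add, lie_add, lie_add, lie_add, ha, hb, hc, hd, hg]
    have E3 : ((4 : F) ^ 3) • ⁅e, x⁆ =
        ((-2 : F) ^ 3) • a + ((-1 : F) ^ 3) • b + 0 + ((1 : F) ^ 3) • d + ((2 : F) ^ 3) • g := by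
      rw [← iter3 4 _ hw]
      conv_lhs => rw [hsum]
      rw [lie_add, lie_add, lie_add, lie_add, lie_add, lie_add, lie_add, lie_add,
        lie_add, lie_add, lie_add, lie_add,
        iter3 _ _ ha, iter3 _ _ hb, iter3 _ _ hd, iter3 _ _ hg, hc]
      simp
    have E5 : ((4 : F) ^ 5) • ⁅e, x⁆ =
        ((-2 : F) ^ 5) • a + ((-1 : F) ^ 5) • b + 0 + ((1 : F) ^ 5) • d + ((2 : F) ^ 5) • g := by
      rw [← iter5 4 _ hw]
      conv_lhs => rw [hsum]
      simp only [lie_add]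
      rw [iter5 _ _ ha, iter5 _ _ hb, iter5 _ _ hd, iter5 _ _ hg, hc]
      simp
    -- Vandermonde combination: p(t) = t^5 - 5 t^3 + 4 t vanishes at -2,-1,0,1,2; p(4) = 720.
    have key : (720 : F) • ⁅e, x⁆ = 0 := by
      have comb : (720 : F) • ⁅e, x⁆ =
          ((4 : F) ^ 5) • ⁅e, x⁆ - (5 : F) • (((4 : F) ^ 3) • ⁅e, x⁆)
            + (4 : F) • ((4 : F) • ⁅e, x⁆) := by
        module
      rw [comb, E5, E3, E1]
      module
    have h720 : (720 : F) ≠ 0 := by norm_num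
    rcases smul_eq_zero.mp key with h' | h'
    · exact absurd h' h720
    · exact h'
  -- Step 2 : direct computation
  have hhy : ⁅h, ⁅f, x⁆⁆ = 0 := by
    rw [leibniz_lie, hhf, hx]
    simp only [neg_lie, smul_lie, lie_smul]
    module
  have hey : ⁅e, ⁅f, x⁆⁆ = (2 : F) • x := by
    rw [leibniz_lie, hef, hx, hex, lie_zero, add_zero]
  have hez : ⁅e, ⁅f, ⁅f, x⁆⁆⁆ = (2 : F) • ⁅f, x⁆ := by
    rw [leibniz_lie, hef, hhy, hey, lie_smul, zero_add]
  rw [hez, lie_smul, hey]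
  module
end

section
/- With notation as above, B_I = ⊕_{α ∈ Φ_I} L_α is an inner ideal of L: ⁅B_I, ⁅B_I, L⁆⁆ ⊆ B_I. -/
/-- With roots encoded by their coefficient tuples relative to a base, `m` the coefficients
of the highest root, `B_I = ⊕_{α ∈ Φ_I} L_α` is an inner ideal of `L`. -/
theorem B_I_innerIdeal {L : Type*} [LieRing L] [LieAlgebra ℂ L] {ι : Type*} [Fintype ι]
    (Φ : Set (ι → ℤ)) (m : ι → ℤ) (hmΦ : m ∈ Φ)
    (hm : ∀ i, 0 < m i)
    (hhigh : ∀ α ∈ Φ, ∀ i, α i ≤ m i)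
    (hlow : ∀ α ∈ Φ, ∀ i, -m i ≤ α i)
    (rootSpace : (ι → ℤ) → Submodule ℂ L)
    (hbr : ∀ α β : ι → ℤ, ∀ x ∈ rootSpace α, ∀ y ∈ rootSpace β,
      ⁅x, y⁆ ∈ rootSpace (α + β))
    (hnotroot : ∀ γ : ι → ℤ, γ ∉ Φ → γ ≠ 0 → rootSpace γ = ⊥)
    (hdecomp : (⨆ γ ∈ insert (0 : ι → ℤ) Φ, rootSpace γ) = ⊤)
    (I : Set ι) (hI : I.Nonempty) :
    ∀ x ∈ (⨆ α ∈ {α ∈ Φ | ∀ j ∈ I, α j = m j}, rootSpace α),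
      ∀ y ∈ (⨆ α ∈ {α ∈ Φ | ∀ j ∈ I, α j = m j}, rootSpace α), ∀ z : L,
        ⁅x, ⁅y, z⁆⁆ ∈ (⨆ α ∈ {α ∈ Φ | ∀ j ∈ I, α j = m j}, rootSpace α) := by
  set S : Set (ι → ℤ) := {α ∈ Φ | ∀ j ∈ I, α j = m j} with hS
  set B : Submodule ℂ L := ⨆ α ∈ S, rootSpace α with hBdef
  obtain ⟨j0, hj0⟩ := hI
  -- key case: all three elements in single root spaces
  have key : ∀ α ∈ S, ∀ β ∈ S, ∀ γ ∈ insert (0 : ι → ℤ) Φ,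
      ∀ u ∈ rootSpace α, ∀ v ∈ rootSpace β, ∀ w ∈ rootSpace γ,
      ⁅u, ⁅v, w⁆⁆ ∈ B := by
    rintro α ⟨hαΦ, hαI⟩ β ⟨hβΦ, hβI⟩ γ hγ u hu v hv w hw
    have h1 : ⁅v, w⁆ ∈ rootSpace (β + γ) := hbr _ _ _ hv _ hw
    have h2 : ⁅u, ⁅v, w⁆⁆ ∈ rootSpace (α + (β + γ)) := hbr _ _ _ hu _ h1
    have hγlow : ∀ i, -m i ≤ γ i := by
      rcases hγ with rfl | hγ
      · intro i; have := hm i; simp; omega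
      · exact hlow γ hγ
    by_cases hroot : α + (β + γ) ∈ Φ
    · have hmem : α + (β + γ) ∈ S := by
        refine ⟨hroot, fun j hj => ?_⟩
        have h3 := hhigh _ hroot j
        have h4 := hγlow j
        have hα := hαI j hj
        have hβ := hβI j hj
        simp only [Pi.add_apply] at h3 ⊢
        omega
      exact Submodule.mem_iSup_of_mem _ (Submodule.mem_iSup_of_mem hmem h2)
    · have hne : α + (β + γ) ≠ 0 := by
        intro h0
        have h5 := congrFun h0 j0
        have hα := hαI j0 hj0
        have hβ := hβI j0 hj0
        have h6 := hγlow j0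
        have h7 := hm j0
        simp only [Pi.add_apply, Pi.zero_apply] at h5
        omega
      rw [hnotroot _ hroot hne] at h2
      simp only [Submodule.mem_bot] at h2
      rw [h2]; exact B.zero_mem
  -- extend to arbitrary z
  have stepz : ∀ α ∈ S, ∀ β ∈ S, ∀ u ∈ rootSpace α, ∀ v ∈ rootSpace β, ∀ w : L,
      ⁅u, ⁅v, w⁆⁆ ∈ B := by
    intro α hα β hβ u hu v hv w
    have hw : w ∈ (⨆ γ ∈ insert (0 : ι → ℤ) Φ, rootSpace γ) := by
      rw [hdecomp]; exact Submodule.mem_top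
    rw [← iSup_subtype''] at hw
    refine Submodule.iSup_induction _ (motive := fun w => ⁅u, ⁅v, w⁆⁆ ∈ B) hw ?_ ?_ ?_
    · rintro ⟨γ, hγ⟩ w hw
      exact key α hα β hβ γ hγ u hu v hv w hw
    · simp
    · intro a b ha hb
      rw [lie_add, lie_add]
      exact B.add_mem ha hb
  -- extend to arbitrary y ∈ B
  have stepy : ∀ α ∈ S, ∀ u ∈ rootSpace α, ∀ v ∈ B, ∀ w : L,
      ⁅u, ⁅v, w⁆⁆ ∈ B := by
    intro α hα u hu v hv
    rw [hBdef, ← iSup_subtype''] at hv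
    refine Submodule.iSup_induction _ (motive := fun v => ∀ w : L, ⁅u, ⁅v, w⁆⁆ ∈ B) hv ?_ ?_ ?_
    · rintro ⟨β, hβ⟩ v hv w
      exact stepz α hα β hβ u hu v hv w
    · intro w; simp
    · intro a b ha hb w
      rw [add_lie, lie_add]
      exact B.add_mem (ha w) (hb w)
  -- extend to arbitrary x ∈ B
  intro x hx
  rw [hBdef, ← iSup_subtype''] at hx
  refine Submodule.iSup_induction _
    (motive := fun x => ∀ y ∈ B, ∀ z : L, ⁅x, ⁅y, z⁆⁆ ∈ B) hx ?_ ?_ ?_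
  · rintro ⟨α, hα⟩ u hu v hv w
    exact stepy α hα u hu v hv w
  · intro y hy z; simp
  · intro a b ha hb y hy z
    rw [add_lie]
    exact B.add_mem (ha y hy z) (hb y hy z)
end

section
/- Let L be a Lie algebra over a field of characteristic 0 and B an abelian inner ideal. If e ∈ B embeds in an sl2-triple {e,h,f} with ⁅e,f⁆ = h, ⁅h,e⁆ = 2e, ⁅h,f⁆ = -2f, then e has ad-nilpotency index exactly 3: (ad e)^3 = 0 but (ad e)^2 ≠ 0. -/
/-- An element of an abelian inner ideal embedded in an sl2-triple has ad-nilpotency index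
exactly 3 (char 0). -/
theorem ad_index_exactly_three {F L : Type*} [Field F] [CharZero F] [LieRing L]
    [LieAlgebra F L] (B : Submodule F L)
    (hinner : ∀ x ∈ B, ∀ y ∈ B, ∀ z : L, ⁅x, ⁅y, z⁆⁆ ∈ B)
    (habelian : ∀ x ∈ B, ∀ y ∈ B, ⁅x, y⁆ = 0)
    (e h f : L) (heB : e ∈ B) (he : e ≠ 0)
    (hef : ⁅e, f⁆ = h) (hhe : ⁅h, e⁆ = (2 : F) • e) (hhf : ⁅h, f⁆ = -((2 : F) • f)) :
    (∀ x : L, ⁅e, ⁅e, ⁅e, x⁆⁆⁆ = 0) ∧ ¬(∀ x : L, ⁅e, ⁅e, x⁆⁆ = 0) := by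
  constructor
  · intro x
    exact habelian e heB _ (hinner e heB e heB x)
  · intro hcon
    have h2 : ⁅e, ⁅e, f⁆⁆ = 0 := hcon f
    rw [hef, ← lie_skew, hhe, neg_eq_zero, smul_eq_zero] at h2
    rcases h2 with h2 | h2
    · exact two_ne_zero h2
    · exact he h2
end

section
/- Let 𝒜 be an associative unital algebra with involution x ↦ x̄, viewed as a structurable algebra with V_{x,y}(z) = (x ȳ)z + (z ȳ)x - (z x̄)y. Then the identity [V_{x,y}, V_{z,w}] = V_{V_{x,y}(z), w} - V_{z, V_{y,x}(w)} holds for all x,y,z,w ∈ 𝒜. -/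
/-- The `V`-operator of a unital associative algebra with involution. -/
def Vop {A : Type*} [Ring A] [StarRing A] (x y z : A) : A :=
  (x * star y) * z + (z * star y) * x - (z * star x) * y

/-- A unital associative algebra with involution is structurable:
`[V_{x,y}, V_{z,w}] = V_{V_{x,y}(z),w} - V_{z,V_{y,x}(w)}`. -/
theorem assoc_with_involution_structurable {F A : Type*} [Field F] [Ring A] [Algebra F A]
    [StarRing A] (h2 : (2 : F) ≠ 0) (h3 : (3 : F) ≠ 0) :
    ∀ x y z w a : A,
      Vop x y (Vop z w a) - Vop z w (Vop x y a) =
        Vop (Vop x y z) w a - Vop z (Vop y x w) a := by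
  intro x y z w a
  simp only [Vop, star_add, star_sub, star_mul, star_star]
  noncomm_ring
end
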